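/- arXiv:1811.07822 — 2 statements merged into one kernel-verified Lean document; each statement's English description precedes it below -/
import Mathlib

section
/- Let a > 0 and let (u(s), v(s)) solve the system (S) on some interval (0, s₀] with initial data u(0)=0, v(0)=a, u'(0)=1, v'(0)=0 (and u, v ∈ C²([0,s₀]), u'² + v'² = 1). Then the integrand t ↦ e^{-(u(t)² + v(t)²)/2} u'(t)v'(t)/u(t) extends continuously to t = 0, and for all s ∈ (0, s₀] the curvature k = -v'u'' + u'v'' satisfies k(s) = φ(s) e^{(u(s)² + v(s)²)/2} / u(s), where φ(s) := ∫₀ˢ e^{-(u(t)² + v(t)²)/2} u'(t)v'(t)/u(t) dt. -/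
open Set

/-- First derivative within `[0, s₀]`. -/
noncomputable def d1 (s₀ : ℝ) (f : ℝ → ℝ) : ℝ → ℝ := derivWithin f (Icc 0 s₀)

/-- Second derivative within `[0, s₀]`. -/
noncomputable def d2 (s₀ : ℝ) (f : ℝ → ℝ) : ℝ → ℝ := derivWithin (d1 s₀ f) (Icc 0 s₀)

/-- `(u, v)` is a `C²([0, s₀])`, arclength-parametrized solution of the system (S)
`u'' = -v'²(u - 1/u) + u'v'v`, `v'' = v'u'(u - 1/u) - u'²v` on `(0, s₀]`,
with initial data `u(0) = 0`, `v(0) = a`, `u'(0) = 1`, `v'(0) = 0`. -/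
def IsSolS (a s₀ : ℝ) (u v : ℝ → ℝ) : Prop :=
  ContDiffOn ℝ 2 u (Icc 0 s₀) ∧ ContDiffOn ℝ 2 v (Icc 0 s₀) ∧
  u 0 = 0 ∧ v 0 = a ∧ d1 s₀ u 0 = 1 ∧ d1 s₀ v 0 = 0 ∧
  (∀ s ∈ Icc (0:ℝ) s₀, (d1 s₀ u s) ^ 2 + (d1 s₀ v s) ^ 2 = 1) ∧
  (∀ s ∈ Ioc (0:ℝ) s₀,
    d2 s₀ u s = -(d1 s₀ v s) ^ 2 * (u s - 1 / u s) + d1 s₀ u s * d1 s₀ v s * v s ∧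
    d2 s₀ v s = d1 s₀ v s * d1 s₀ u s * (u s - 1 / u s) - (d1 s₀ u s) ^ 2 * v s)

section basic
variable {s₀ : ℝ} {f : ℝ → ℝ} (hs₀ : 0 < s₀) (hf : ContDiffOn ℝ 2 f (Icc 0 s₀))
include hs₀ hf

lemma d1_contDiffOn : ContDiffOn ℝ 1 (d1 s₀ f) (Icc 0 s₀) :=
  hf.derivWithin (uniqueDiffOn_Icc hs₀) (by norm_num)

lemma hasD1 : ∀ s ∈ Icc (0:ℝ) s₀, HasDerivWithinAt f (d1 s₀ f s) (Icc 0 s₀) s :=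
  fun s hs => ((hf.differentiableOn (by norm_num)) s hs).hasDerivWithinAt

lemma hasD2 : ∀ s ∈ Icc (0:ℝ) s₀, HasDerivWithinAt (d1 s₀ f) (d2 s₀ f s) (Icc 0 s₀) s :=
  fun s hs => (((d1_contDiffOn hs₀ hf).differentiableOn (by norm_num)) s hs).hasDerivWithinAt

lemma d1_continuousOn : ContinuousOn (d1 s₀ f) (Icc 0 s₀) :=
  (d1_contDiffOn hs₀ hf).continuousOn

lemma d2_continuousOn : ContinuousOn (d2 s₀ f) (Icc 0 s₀) :=
  ((d1_contDiffOn hs₀ hf).derivWithin (uniqueDiffOn_Icc hs₀) (by norm_num : (0:WithTop ℕ∞) + 1 ≤ 1)).continuousOn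

end basic

set_option linter.unusedSectionVars false

section touch
variable {a s₀ s₁ : ℝ} {u v : ℝ → ℝ}

lemma Ioo_sub_Icc (hs₁ : s₁ ∈ Ioc 0 s₀) : Ioo (0:ℝ) s₁ ⊆ Icc 0 s₀ :=
  fun x hx => ⟨hx.1.le, hx.2.le.trans hs₁.2⟩

lemma l_neBot (h : 0 < s₁) : (nhdsWithin s₁ (Ioo 0 s₁)).NeBot := by
  rw [nhdsWithin_Ioo_eq_nhdsLT h]; infer_instance

lemma tendsto_l {f : ℝ → ℝ} (hs₁ : s₁ ∈ Ioc 0 s₀) (hf : ContinuousOn f (Icc 0 s₀)) :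
    Filter.Tendsto f (nhdsWithin s₁ (Ioo 0 s₁)) (nhds (f s₁)) :=
  ((hf s₁ ⟨hs₁.1.le, hs₁.2⟩).tendsto).mono_left (nhdsWithin_mono _ (Ioo_sub_Icc hs₁))

lemma tendsto_slope_l {f : ℝ → ℝ} {l : ℝ} (hs₁ : s₁ ∈ Ioc 0 s₀)
    (hf : HasDerivWithinAt f l (Icc 0 s₀) s₁) :
    Filter.Tendsto (fun s => (f s - f s₁) / (s - s₁)) (nhdsWithin s₁ (Ioo 0 s₁)) (nhds l) := by
  rw [hasDerivWithinAt_iff_tendsto_slope] at hf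
  have hsub : Ioo (0:ℝ) s₁ ⊆ Icc 0 s₀ \ {s₁} := fun x hx =>
    ⟨Ioo_sub_Icc hs₁ hx, by simp [ne_of_lt hx.2]⟩
  have := hf.mono_left (nhdsWithin_mono _ hsub)
  refine this.congr (fun s => ?_)
  rw [slope_def_field]

end touch

open Filter

lemma abs_d1_le {s₀ : ℝ} {u v : ℝ → ℝ}
    (harc : ∀ s ∈ Icc (0:ℝ) s₀, (d1 s₀ u s)^2 + (d1 s₀ v s)^2 = 1)
    (s : ℝ) (hs : s ∈ Icc (0:ℝ) s₀) : |d1 s₀ u s| ≤ 1 ∧ |d1 s₀ v s| ≤ 1 := by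
  constructor <;> rw [abs_le] <;> constructor <;>
    nlinarith [harc s hs, sq_nonneg (d1 s₀ u s), sq_nonneg (d1 s₀ v s)]

lemma exists_bound2 {s₀ : ℝ} {f g : ℝ → ℝ} (hs₀ : 0 < s₀)
    (hf : ContinuousOn f (Icc 0 s₀)) (hg : ContinuousOn g (Icc 0 s₀)) :
    ∃ B : ℝ, 0 < B ∧ ∀ s ∈ Icc (0:ℝ) s₀, |f s| ≤ B ∧ |g s| ≤ B := by
  obtain ⟨B1, hB1⟩ := isCompact_Icc.exists_bound_of_continuousOn hf
  obtain ⟨B2, hB2⟩ := isCompact_Icc.exists_bound_of_continuousOn hg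
  have h0 : (0:ℝ) ∈ Icc 0 s₀ := ⟨le_rfl, hs₀.le⟩
  have hb1 : 0 ≤ B1 := le_trans (norm_nonneg _) (hB1 0 h0)
  refine ⟨max B1 B2 + 1, by positivity, fun s hs => ⟨?_, ?_⟩⟩
  · have := hB1 s hs; simp only [Real.norm_eq_abs] at this
    have := le_max_left B1 B2; linarith
  · have := hB2 s hs; simp only [Real.norm_eq_abs] at this
    have := le_max_right B1 B2; linarith

lemma v'_zero_at_touch {s₀ s₁ : ℝ} {u v : ℝ → ℝ} (hs₀ : 0 < s₀)
    (hu : ContDiffOn ℝ 2 u (Icc 0 s₀)) (hv : ContDiffOn ℝ 2 v (Icc 0 s₀))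
    (harc : ∀ s ∈ Icc (0:ℝ) s₀, (d1 s₀ u s)^2 + (d1 s₀ v s)^2 = 1)
    (hodeu : ∀ s ∈ Ioc (0:ℝ) s₀,
      d2 s₀ u s = -(d1 s₀ v s)^2 * (u s - 1/u s) + d1 s₀ u s * d1 s₀ v s * v s)
    (hs₁ : s₁ ∈ Ioc 0 s₀) (hu1 : u s₁ = 0) (hupos : ∀ s ∈ Ioo 0 s₁, 0 < u s) :
    d1 s₀ v s₁ = 0 := by
  obtain ⟨B, hB0, hB⟩ := exists_bound2 hs₀ hv.continuousOn (d2_continuousOn hs₀ hu)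
  set M : ℝ := 2 * B with hM
  haveI := l_neBot hs₁.1
  -- eventually u s ≤ 1/2
  have htu : Tendsto u (nhdsWithin s₁ (Ioo 0 s₁)) (nhds 0) := by
    have := tendsto_l hs₁ hu.continuousOn; rwa [hu1] at this
  have hev2 : ∀ᶠ s in nhdsWithin s₁ (Ioo 0 s₁), u s < 1/2 :=
    htu.eventually_lt_const (by norm_num)
  have hevm : ∀ᶠ s in nhdsWithin s₁ (Ioo 0 s₁), s ∈ Ioo (0:ℝ) s₁ := self_mem_nhdsWithin
  have hev_le : ∀ᶠ s in nhdsWithin s₁ (Ioo 0 s₁), (d1 s₀ v s)^2 ≤ 2 * M * u s := by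
    filter_upwards [hev2, hevm] with s h12 hsm
    have hsIcc : s ∈ Icc (0:ℝ) s₀ := Ioo_sub_Icc hs₁ hsm
    have hsIoc : s ∈ Ioc (0:ℝ) s₀ := ⟨hsm.1, hsIcc.2⟩
    have hus : 0 < u s := hupos s hsm
    have hode := hodeu s hsIoc
    have hb := hB s hsIcc
    have ha1 := abs_d1_le harc s hsIcc
    have key : (d1 s₀ v s)^2 * (1/u s - u s) = d2 s₀ u s - d1 s₀ u s * d1 s₀ v s * v s := by
      rw [hode]; ring
    have h1 : d2 s₀ u s - d1 s₀ u s * d1 s₀ v s * v s ≤ M := by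
      have h2 : |d1 s₀ u s * d1 s₀ v s * v s| ≤ B := by
        rw [abs_mul, abs_mul]
        calc |d1 s₀ u s| * |d1 s₀ v s| * |v s| ≤ 1 * 1 * B := by
              apply mul_le_mul _ hb.1 (abs_nonneg _) (by norm_num)
              exact mul_le_mul ha1.1 ha1.2 (abs_nonneg _) (by linarith [ha1.1, abs_nonneg (d1 s₀ u s)])
        _ = B := by ring
      have h3 := abs_le.mp h2
      have h4 := abs_le.mp hb.2
      rw [hM]; linarith
    have hM0 : (0:ℝ) < M := by rw [hM]; positivity
    have h5 : (d1 s₀ v s)^2 * (1 - u s^2) ≤ M * u s := by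
      have h6 : (d1 s₀ v s)^2 * (1/u s - u s) * u s ≤ M * u s :=
        mul_le_mul_of_nonneg_right (key ▸ h1) hus.le
      have h8 : (d1 s₀ v s)^2 * ((1/u s) * u s) = (d1 s₀ v s)^2 := by
        rw [one_div_mul_cancel (ne_of_gt hus), mul_one]
      nlinarith [h6, h8]
    have husq : u s^2 < 1/4 := by nlinarith
    nlinarith [h5, husq, sq_nonneg (d1 s₀ v s), hus.le, hM0]
  have t1 : Tendsto (fun s => (d1 s₀ v s)^2) (nhdsWithin s₁ (Ioo 0 s₁))
      (nhds ((d1 s₀ v s₁)^2)) := (tendsto_l hs₁ (d1_continuousOn hs₀ hv)).pow 2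
  have t2 : Tendsto (fun s => 2 * M * u s) (nhdsWithin s₁ (Ioo 0 s₁)) (nhds 0) := by
    have := htu.const_mul (2*M); simpa using this
  have hle : (d1 s₀ v s₁)^2 ≤ 0 := le_of_tendsto_of_tendsto t1 t2 hev_le
  have := sq_nonneg (d1 s₀ v s₁)
  nlinarith [hle, this]

lemma u'_neg_at_touch {s₀ s₁ : ℝ} {u v : ℝ → ℝ} (hs₀ : 0 < s₀)
    (hu : ContDiffOn ℝ 2 u (Icc 0 s₀))
    (harc : ∀ s ∈ Icc (0:ℝ) s₀, (d1 s₀ u s)^2 + (d1 s₀ v s)^2 = 1)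
    (hv'1 : d1 s₀ v s₁ = 0)
    (hs₁ : s₁ ∈ Ioc 0 s₀) (hu1 : u s₁ = 0) (hupos : ∀ s ∈ Ioo 0 s₁, 0 < u s) :
    d1 s₀ u s₁ = -1 := by
  haveI := l_neBot hs₁.1
  have hsq : (d1 s₀ u s₁)^2 = 1 := by
    have := harc s₁ ⟨hs₁.1.le, hs₁.2⟩; rw [hv'1] at this; nlinarith
  have hslope : Tendsto (fun s => (u s - u s₁) / (s - s₁)) (nhdsWithin s₁ (Ioo 0 s₁))
      (nhds (d1 s₀ u s₁)) := tendsto_slope_l hs₁ (hasD1 hs₀ hu s₁ ⟨hs₁.1.le, hs₁.2⟩)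
  have hle : d1 s₀ u s₁ ≤ 0 := by
    refine le_of_tendsto hslope ?_
    filter_upwards [self_mem_nhdsWithin] with s hsm
    have h1 : 0 < u s := hupos s hsm
    have h2 : s - s₁ < 0 := by linarith [hsm.2]
    rw [hu1, sub_zero]
    exact le_of_lt (div_neg_of_pos_of_neg h1 h2)
  nlinarith [hsq, hle]

lemma v_zero_at_touch {s₀ s₁ : ℝ} {u v : ℝ → ℝ} (hs₀ : 0 < s₀)
    (hu : ContDiffOn ℝ 2 u (Icc 0 s₀)) (hv : ContDiffOn ℝ 2 v (Icc 0 s₀))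
    (harc : ∀ s ∈ Icc (0:ℝ) s₀, (d1 s₀ u s)^2 + (d1 s₀ v s)^2 = 1)
    (hodev : ∀ s ∈ Ioc (0:ℝ) s₀,
      d2 s₀ v s = d1 s₀ v s * d1 s₀ u s * (u s - 1/u s) - (d1 s₀ u s)^2 * v s)
    (hv'1 : d1 s₀ v s₁ = 0) (hu'1 : d1 s₀ u s₁ = -1)
    (hs₁ : s₁ ∈ Ioc 0 s₀) (hu1 : u s₁ = 0) (hupos : ∀ s ∈ Ioo 0 s₁, 0 < u s) :
    v s₁ = 0 := by
  haveI := l_neBot hs₁.1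
  have hs₁I : s₁ ∈ Icc (0:ℝ) s₀ := ⟨hs₁.1.le, hs₁.2⟩
  set L : ℝ := d2 s₀ v s₁ with hL
  -- L = -v s₁ from the ODE at s₁
  have hLv : L = -v s₁ := by
    have := (hodev s₁ hs₁).symm
    rw [hv'1, hu'1] at this
    simpa using this.symm
  -- slope limits
  have hsv' : Tendsto (fun s => d1 s₀ v s / (s - s₁)) (nhdsWithin s₁ (Ioo 0 s₁)) (nhds L) := by
    have := tendsto_slope_l hs₁ (hasD2 hs₀ hv s₁ hs₁I)
    rw [← hL] at this
    refine this.congr (fun s => by rw [hv'1, sub_zero])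
  have hsu : Tendsto (fun s => u s / (s - s₁)) (nhdsWithin s₁ (Ioo 0 s₁)) (nhds (-1)) := by
    have := tendsto_slope_l hs₁ (hasD1 hs₀ hu s₁ hs₁I)
    rw [hu'1] at this
    refine this.congr (fun s => by rw [hu1, sub_zero])
  -- v'/u tends to -L
  have hv'u : Tendsto (fun s => d1 s₀ v s / u s) (nhdsWithin s₁ (Ioo 0 s₁)) (nhds (-L)) := by
    have h1 : Tendsto (fun s => (d1 s₀ v s / (s - s₁)) * (u s / (s - s₁))⁻¹)
        (nhdsWithin s₁ (Ioo 0 s₁)) (nhds (L * (-1)⁻¹)) :=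
      hsv'.mul (hsu.inv₀ (by norm_num))
    have h2 : L * (-1:ℝ)⁻¹ = -L := by norm_num
    rw [h2] at h1
    refine h1.congr' ?_
    filter_upwards [self_mem_nhdsWithin] with s hsm
    have h3 : s - s₁ ≠ 0 := by have := hsm.2; intro h; linarith [sub_eq_zero.mp h ▸ this]
    have h4 : u s ≠ 0 := ne_of_gt (hupos s hsm)
    field_simp
    try ring
  -- limit of d2 v along l is zero
  have hd2v : Tendsto (d2 s₀ v) (nhdsWithin s₁ (Ioo 0 s₁)) (nhds L) := by
    rw [hL]; exact tendsto_l hs₁ (d2_continuousOn hs₀ hv)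
  have hd2v' : Tendsto (d2 s₀ v) (nhdsWithin s₁ (Ioo 0 s₁)) (nhds 0) := by
    have hrw : Tendsto (fun s => d1 s₀ v s * d1 s₀ u s * u s - (d1 s₀ v s / u s) * d1 s₀ u s
        - (d1 s₀ u s)^2 * v s) (nhdsWithin s₁ (Ioo 0 s₁))
        (nhds (0 * (-1) * 0 - (-L) * (-1) - (-1)^2 * v s₁)) := by
      have t1 : Tendsto (d1 s₀ v) (nhdsWithin s₁ (Ioo 0 s₁)) (nhds 0) := by
        have := tendsto_l hs₁ (d1_continuousOn hs₀ hv); rwa [hv'1] at this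
      have t2 : Tendsto (d1 s₀ u) (nhdsWithin s₁ (Ioo 0 s₁)) (nhds (-1)) := by
        have := tendsto_l hs₁ (d1_continuousOn hs₀ hu); rwa [hu'1] at this
      have t3 : Tendsto u (nhdsWithin s₁ (Ioo 0 s₁)) (nhds 0) := by
        have := tendsto_l hs₁ hu.continuousOn; rwa [hu1] at this
      have t4 : Tendsto v (nhdsWithin s₁ (Ioo 0 s₁)) (nhds (v s₁)) :=
        tendsto_l hs₁ hv.continuousOn
      exact (((t1.mul t2).mul t3).sub (hv'u.mul t2)).sub ((t2.pow 2).mul t4)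
    have heq : (0:ℝ) * (-1) * 0 - (-L) * (-1) - (-1)^2 * v s₁ = 0 := by
      rw [hLv]; ring
    rw [heq] at hrw
    refine hrw.congr' ?_
    filter_upwards [self_mem_nhdsWithin] with s hsm
    have h4 : u s ≠ 0 := ne_of_gt (hupos s hsm)
    have hsIoc : s ∈ Ioc (0:ℝ) s₀ := ⟨hsm.1, hsm.2.le.trans hs₁.2⟩
    rw [hodev s hsIoc]
    field_simp
  have : L = 0 := tendsto_nhds_unique hd2v hd2v'
  rw [this] at hLv; linarith

lemma gronwall_zero {E E' : ℝ → ℝ} {b c C : ℝ} (hbc : b < c)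
    (hcont : ContinuousOn E (Icc b c))
    (hderiv : ∀ x ∈ Ioo b c, HasDerivAt E (E' x) x)
    (hbound : ∀ x ∈ Ioo b c, -C * E x ≤ E' x)
    (hnonneg : ∀ x ∈ Icc b c, 0 ≤ E x) (hEc : E c = 0) :
    ∀ x ∈ Icc b c, E x = 0 := by
  set h : ℝ → ℝ := fun s => E s * Real.exp (C * s) with hh
  have hexp : ∀ x : ℝ, HasDerivAt (fun s : ℝ => Real.exp (C * s)) (Real.exp (C * x) * C) x := by
    intro x
    have h1 : HasDerivAt (fun s : ℝ => C * s) C x := by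
      simpa using (hasDerivAt_id x).const_mul C
    exact (Real.hasDerivAt_exp (C * x)).comp x h1
  have hderivh : ∀ x ∈ Ioo b c,
      HasDerivAt h (E' x * Real.exp (C * x) + E x * (Real.exp (C * x) * C)) x :=
    fun x hx => (hderiv x hx).mul (hexp x)
  have hmono : MonotoneOn h (Icc b c) := by
    apply monotoneOn_of_deriv_nonneg (convex_Icc b c)
    · exact hcont.mul (Real.continuous_exp.comp (continuous_const.mul continuous_id)).continuousOn
    · rw [interior_Icc]
      exact fun x hx => (hderivh x hx).differentiableAt.differentiableWithinAt
    · rw [interior_Icc]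
      intro x hx
      rw [(hderivh x hx).deriv]
      have h2 := hbound x hx
      have h3 := Real.exp_pos (C * x)
      nlinarith
  intro x hx
  have h1 : h x ≤ h c := hmono hx ⟨hbc.le, le_rfl⟩ hx.2
  have h2 : h c = 0 := by simp [hh, hEc]
  have h3 : 0 ≤ h x := mul_nonneg (hnonneg x hx) (Real.exp_pos _).le
  have h4 : h x = 0 := le_antisymm (h2 ▸ h1) h3
  have h5 := Real.exp_pos (C * x)
  have : E x * Real.exp (C * x) = 0 := h4
  rcases mul_eq_zero.mp this with h | h
  · exact h
  · exact absurd h (ne_of_gt h5)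

lemma E_vanishes {s₀ b c D : ℝ} {u v : ℝ → ℝ} (hs₀ : 0 < s₀)
    (hu : ContDiffOn ℝ 2 u (Icc 0 s₀)) (hv : ContDiffOn ℝ 2 v (Icc 0 s₀))
    (harc : ∀ s ∈ Icc (0:ℝ) s₀, (d1 s₀ u s)^2 + (d1 s₀ v s)^2 = 1)
    (hodev : ∀ s ∈ Ioc (0:ℝ) s₀,
      d2 s₀ v s = d1 s₀ v s * d1 s₀ u s * (u s - 1/u s) - (d1 s₀ u s)^2 * v s)
    (hb : 0 < b) (hbc : b < c) (hc : c ≤ s₀) (hD : 0 ≤ D)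
    (hterm : ∀ x ∈ Ioo b c, -D ≤ d1 s₀ u x * (u x - 1/u x))
    (hvc : v c = 0) (hv'c : d1 s₀ v c = 0) :
    ∀ x ∈ Icc b c, v x = 0 ∧ d1 s₀ v x = 0 := by
  set E : ℝ → ℝ := fun s => v s ^ 2 + d1 s₀ v s ^ 2 with hE
  set E' : ℝ → ℝ := fun s => 2 * v s * d1 s₀ v s + 2 * d1 s₀ v s * d2 s₀ v s with hE'
  have hsub : Icc b c ⊆ Icc 0 s₀ := Icc_subset_Icc hb.le hc
  have hcont : ContinuousOn E (Icc b c) :=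
    ((hv.continuousOn.mono hsub).pow 2).add (((d1_continuousOn hs₀ hv).mono hsub).pow 2)
  have hderiv : ∀ x ∈ Ioo b c, HasDerivAt E (E' x) x := by
    intro x hx
    have hxI : x ∈ Icc (0:ℝ) s₀ := hsub (Ioo_subset_Icc_self hx)
    have hnb : Icc (0:ℝ) s₀ ∈ nhds x := Icc_mem_nhds (lt_trans hb hx.1) (lt_of_lt_of_le hx.2 hc)
    have h1 : HasDerivAt v (d1 s₀ v x) x := (hasD1 hs₀ hv x hxI).hasDerivAt hnb
    have h2 : HasDerivAt (d1 s₀ v) (d2 s₀ v x) x := (hasD2 hs₀ hv x hxI).hasDerivAt hnb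
    have hfun : HasDerivAt (fun s => v s ^ 2 + d1 s₀ v s ^ 2)
        (2 * v x * d1 s₀ v x + 2 * d1 s₀ v x * d2 s₀ v x) x := by
      have := (h1.fun_pow 2).add (h2.fun_pow 2)
      refine this.congr_deriv (Eq.symm ?_)
      ring
    exact hfun
  have hbound : ∀ x ∈ Ioo b c, -(2 + 2 * D) * E x ≤ E' x := by
    intro x hx
    have hxI : x ∈ Icc (0:ℝ) s₀ := hsub (Ioo_subset_Icc_self hx)
    have hxIoc : x ∈ Ioc (0:ℝ) s₀ := ⟨lt_trans hb hx.1, hxI.2⟩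
    have hode := hodev x hxIoc
    have harcx := harc x hxI
    have ht := hterm x hx
    have t1 : -D * (d1 s₀ v x)^2 ≤ d1 s₀ u x * (u x - 1/u x) * (d1 s₀ v x)^2 :=
      mul_le_mul_of_nonneg_right ht (sq_nonneg _)
    have h1 : (1 - (d1 s₀ u x)^2) = (d1 s₀ v x)^2 := by linarith
    have h2 : 0 ≤ (d1 s₀ v x)^2 * (v x + d1 s₀ v x)^2 := by positivity
    have h3 : 0 ≤ (d1 s₀ u x)^2 * (v x - d1 s₀ v x)^2 := by positivity
    have h4 : 0 ≤ (d1 s₀ u x)^2 * (v x + d1 s₀ v x)^2 := by positivity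
    have hDE : 0 ≤ D * (v x)^2 := by positivity
    show -(2 + 2*D) * (v x ^ 2 + d1 s₀ v x ^ 2) ≤
      2 * v x * d1 s₀ v x + 2 * d1 s₀ v x * d2 s₀ v x
    rw [hode]
    nlinarith [t1, h2, h3, h4, hDE, sq_nonneg (v x + d1 s₀ v x), sq_nonneg (v x - d1 s₀ v x)]
  have hEc : E c = 0 := by simp [hE, hvc, hv'c]
  have hnonneg : ∀ x ∈ Icc b c, 0 ≤ E x := fun x _ => by positivity
  have hzero := gronwall_zero hbc hcont hderiv hbound hnonneg hEc
  intro x hx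
  have h1 : v x ^ 2 + d1 s₀ v x ^ 2 = 0 := hzero x hx
  constructor <;> nlinarith [sq_nonneg (v x), sq_nonneg (d1 s₀ v x)]

lemma exists_b_of_eventually {c : ℝ} (hc : 0 < c) {P : ℝ → Prop}
    (h : {s | P s} ∈ nhdsWithin c (Ioo 0 c)) :
    ∃ b, 0 < b ∧ b < c ∧ ∀ x ∈ Ioo b c, P x := by
  obtain ⟨ε, hε, hsub⟩ := Metric.mem_nhdsWithin_iff.mp h
  refine ⟨max (c - ε/2) (c/2), lt_max_of_lt_right (by linarith),
    max_lt (by linarith) (by linarith), fun x hx => ?_⟩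
  have hx1 := hx.1
  have hx2 := hx.2
  have hb1 : c - ε/2 < x := lt_of_le_of_lt (le_max_left _ _) hx1
  have hb2 : c/2 < x := lt_of_le_of_lt (le_max_right _ _) hx1
  apply hsub
  constructor
  · rw [Metric.mem_ball, Real.dist_eq, abs_lt]; constructor <;> linarith
  · exact ⟨by linarith, hx2⟩

lemma touch_false {a s₀ s₁ : ℝ} {u v : ℝ → ℝ} (ha : 0 < a) (hs₀ : 0 < s₀)
    (hu : ContDiffOn ℝ 2 u (Icc 0 s₀)) (hv : ContDiffOn ℝ 2 v (Icc 0 s₀))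
    (hv0 : v 0 = a)
    (harc : ∀ s ∈ Icc (0:ℝ) s₀, (d1 s₀ u s)^2 + (d1 s₀ v s)^2 = 1)
    (hodeu : ∀ s ∈ Ioc (0:ℝ) s₀,
      d2 s₀ u s = -(d1 s₀ v s)^2 * (u s - 1/u s) + d1 s₀ u s * d1 s₀ v s * v s)
    (hodev : ∀ s ∈ Ioc (0:ℝ) s₀,
      d2 s₀ v s = d1 s₀ v s * d1 s₀ u s * (u s - 1/u s) - (d1 s₀ u s)^2 * v s)
    (hs₁ : s₁ ∈ Ioc 0 s₀) (hu1 : u s₁ = 0) (hupos : ∀ s ∈ Ioo 0 s₁, 0 < u s) :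
    False := by
  have hs₁I : s₁ ∈ Icc (0:ℝ) s₀ := ⟨hs₁.1.le, hs₁.2⟩
  have hv'1 : d1 s₀ v s₁ = 0 := v'_zero_at_touch hs₀ hu hv harc hodeu hs₁ hu1 hupos
  have hu'1 : d1 s₀ u s₁ = -1 := u'_neg_at_touch hs₀ hu harc hv'1 hs₁ hu1 hupos
  have hvz : v s₁ = 0 := v_zero_at_touch hs₀ hu hv harc hodev hv'1 hu'1 hs₁ hu1 hupos
  -- find b < s₁ on which u' < 0 and 0 < u < 1
  have hev : ∀ᶠ s in nhdsWithin s₁ (Ioo 0 s₁),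
      d1 s₀ u s < 0 ∧ u s < 1 ∧ 0 < u s := by
    have t1 : Tendsto (d1 s₀ u) (nhdsWithin s₁ (Ioo 0 s₁)) (nhds (-1)) := by
      have := tendsto_l hs₁ (d1_continuousOn hs₀ hu); rwa [hu'1] at this
    have t2 : Tendsto u (nhdsWithin s₁ (Ioo 0 s₁)) (nhds 0) := by
      have := tendsto_l hs₁ hu.continuousOn; rwa [hu1] at this
    filter_upwards [t1.eventually_lt_const (by norm_num : (-1:ℝ) < 0),
      t2.eventually_lt_const (by norm_num : (0:ℝ) < 1), self_mem_nhdsWithin] with s h1 h2 h3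
    exact ⟨h1, h2, hupos s h3⟩
  obtain ⟨b, hb0, hbs₁, hbP⟩ := exists_b_of_eventually hs₁.1 hev
  -- region 1 : v, v' vanish on [b, s₁]
  have hvan1 : ∀ x ∈ Icc b s₁, v x = 0 ∧ d1 s₀ v x = 0 := by
    apply E_vanishes hs₀ hu hv harc hodev hb0 hbs₁ hs₁.2 le_rfl _ hvz hv'1
    intro x hx
    obtain ⟨h1, h2, h3⟩ := hbP x hx
    have : u x - 1/u x ≤ 0 := by
      have h4 : 1 ≤ 1/u x := (le_div_iff₀ h3).mpr (by linarith)
      linarith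
    nlinarith [mul_nonneg (neg_nonneg.mpr h1.le) (neg_nonneg.mpr this)]
  -- the set T and its infimum
  set T : Set ℝ := {t | t ∈ Icc 0 s₁ ∧ ∀ x ∈ Icc t s₁, v x = 0 ∧ d1 s₀ v x = 0} with hT
  have hbT : b ∈ T := ⟨⟨hb0.le, hbs₁.le⟩, hvan1⟩
  have hTne : T.Nonempty := ⟨b, hbT⟩
  have hTbdd : BddBelow T := ⟨0, fun t ht => ht.1.1⟩
  set c : ℝ := sInf T with hc
  have hc0 : 0 ≤ c := le_csInf hTne (fun t ht => ht.1.1)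
  have hcb : c ≤ b := csInf_le hTbdd hbT
  have hcs₁ : c < s₁ := lt_of_le_of_lt hcb hbs₁
  have hcI : c ∈ Icc (0:ℝ) s₀ := ⟨hc0, le_trans hcs₁.le hs₁.2⟩
  have hvan : ∀ x, c < x → x ≤ s₁ → v x = 0 ∧ d1 s₀ v x = 0 := by
    intro x h1 h2
    obtain ⟨t, htT, htx⟩ := exists_lt_of_csInf_lt hTne h1
    exact htT.2 x ⟨htx.le, h2⟩
  haveI : (nhdsWithin c (Ioo c s₁)).NeBot := by
    rw [nhdsWithin_Ioo_eq_nhdsGT hcs₁]; infer_instance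
  have hsubc : Ioo c s₁ ⊆ Icc 0 s₀ := fun x hx =>
    ⟨le_trans hc0 hx.1.le, le_trans hx.2.le hs₁.2⟩
  have hvc : v c = 0 := by
    have t1 : Tendsto v (nhdsWithin c (Ioo c s₁)) (nhds (v c)) :=
      ((hv.continuousOn c hcI).tendsto).mono_left (nhdsWithin_mono _ hsubc)
    have t2 : Tendsto v (nhdsWithin c (Ioo c s₁)) (nhds 0) := by
      refine tendsto_const_nhds.congr' ?_
      filter_upwards [self_mem_nhdsWithin] with x hx
      exact ((hvan x hx.1 hx.2.le).1).symm
    exact tendsto_nhds_unique t1 t2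
  have hv'c : d1 s₀ v c = 0 := by
    have t1 : Tendsto (d1 s₀ v) (nhdsWithin c (Ioo c s₁)) (nhds (d1 s₀ v c)) :=
      (((d1_continuousOn hs₀ hv) c hcI).tendsto).mono_left (nhdsWithin_mono _ hsubc)
    have t2 : Tendsto (d1 s₀ v) (nhdsWithin c (Ioo c s₁)) (nhds 0) := by
      refine tendsto_const_nhds.congr' ?_
      filter_upwards [self_mem_nhdsWithin] with x hx
      exact ((hvan x hx.1 hx.2.le).2).symm
    exact tendsto_nhds_unique t1 t2
  -- c = 0 is impossible
  rcases eq_or_lt_of_le hc0 with hc0' | hc0'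
  · rw [← hc0'] at hvc; rw [hv0] at hvc; linarith
  -- now c > 0
  have hvanIcc : ∀ x ∈ Icc c s₁, v x = 0 ∧ d1 s₀ v x = 0 := by
    intro x hx
    rcases eq_or_lt_of_le hx.1 with h | h
    · rw [← h]; exact ⟨hvc, hv'c⟩
    · exact hvan x h hx.2
  -- u' = -1 on [c, s₁]
  have hu'sq : ∀ x ∈ Icc c s₁, (d1 s₀ u x)^2 = 1 := by
    intro x hx
    have hxI : x ∈ Icc (0:ℝ) s₀ := ⟨le_trans hc0 hx.1, le_trans hx.2 hs₁.2⟩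
    have := harc x hxI
    rw [(hvanIcc x hx).2] at this
    nlinarith
  have hu'neg : ∀ x ∈ Icc c s₁, d1 s₀ u x = -1 := by
    intro x hx
    have hsq := hu'sq x hx
    have : (d1 s₀ u x - 1) * (d1 s₀ u x + 1) = 0 := by nlinarith
    rcases mul_eq_zero.mp this with h | h
    · exfalso
      have hx1 : d1 s₀ u x = 1 := by linarith
      have hcont : ContinuousOn (d1 s₀ u) (Icc x s₁) :=
        (d1_continuousOn hs₀ hu).mono (Icc_subset_Icc (le_trans hc0 hx.1) hs₁.2)
      have hivt := intermediate_value_Icc' hx.2 hcont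
      have h0mem : (0:ℝ) ∈ Icc (d1 s₀ u s₁) (d1 s₀ u x) := by
        rw [hu'1, hx1]; exact ⟨by norm_num, by norm_num⟩
      obtain ⟨y, hy, hy0⟩ := hivt h0mem
      have hysq := hu'sq y ⟨le_trans hx.1 hy.1, hy.2⟩
      rw [hy0] at hysq; norm_num at hysq
    · linarith
  -- u c = s₁ - c
  have huc : u c = s₁ - c := by
    have hgcont : ContinuousOn (fun s => u s + s) (Icc c s₁) :=
      (hu.continuousOn.mono (Icc_subset_Icc hc0 hs₁.2)).add continuousOn_id
    have hgder : ∀ x ∈ Ico c s₁, HasDerivWithinAt (fun s => u s + s) 0 (Ici x) x := by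
      intro x hx
      have hxI : x ∈ Icc (0:ℝ) s₀ := ⟨le_trans hc0 hx.1, le_trans hx.2.le hs₁.2⟩
      have hnb : Icc (0:ℝ) s₀ ∈ nhds x :=
        Icc_mem_nhds (lt_of_lt_of_le hc0' hx.1) (lt_of_lt_of_le hx.2 hs₁.2)
      have h1 : HasDerivAt u (d1 s₀ u x) x := (hasD1 hs₀ hu x hxI).hasDerivAt hnb
      have h2 : HasDerivAt (fun s => u s + s) (d1 s₀ u x + 1) x := h1.add (hasDerivAt_id x)
      rw [hu'neg x ⟨hx.1, hx.2.le⟩] at h2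
      norm_num at h2
      exact h2.hasDerivWithinAt
    have := constant_of_has_deriv_right_zero hgcont hgder s₁ ⟨hcs₁.le, le_rfl⟩
    simp only [hu1, zero_add] at this
    linarith [this]
  have hucpos : 0 < u c := by rw [huc]; linarith
  -- find b' < c with u > u c / 2 on (b', c)
  haveI : (nhdsWithin c (Ioo 0 c)).NeBot := l_neBot hc0'
  have hev' : ∀ᶠ s in nhdsWithin c (Ioo 0 c), u c / 2 < u s := by
    have t1 : Tendsto u (nhdsWithin c (Ioo 0 c)) (nhds (u c)) :=
      ((hu.continuousOn c hcI).tendsto).mono_left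
        (nhdsWithin_mono _ (fun x hx => ⟨hx.1.le, le_trans hx.2.le hcI.2⟩))
    exact t1.eventually_const_lt (by linarith)
  obtain ⟨b', hb'0, hb'c, hb'P⟩ := exists_b_of_eventually hc0' hev'
  -- bound for u on Icc 0 s₀
  obtain ⟨B, hB0, hB⟩ := exists_bound2 hs₀ hu.continuousOn hu.continuousOn
  -- region 2 : v, v' vanish on [b', c]
  have hvan2 : ∀ x ∈ Icc b' c, v x = 0 ∧ d1 s₀ v x = 0 := by
    apply E_vanishes hs₀ hu hv harc hodev hb'0 hb'c (le_trans hcs₁.le hs₁.2)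
      (by positivity : (0:ℝ) ≤ B + 2 / (u c / 2)) _ hvc hv'c
    intro x hx
    have hxI : x ∈ Icc (0:ℝ) s₀ :=
      ⟨hx.1.le.trans' hb'0.le, le_trans hx.2.le (le_trans hcs₁.le hs₁.2)⟩
    have hux : u c / 2 < u x := hb'P x hx
    have hux0 : 0 < u x := lt_trans (by linarith) hux
    have h1 : |d1 s₀ u x| ≤ 1 := (abs_d1_le harc x hxI).1
    have h2 : |u x| ≤ B := (hB x hxI).1
    have h3 : 1 / u x ≤ 2 / u c := by
      rw [div_le_div_iff₀ hux0 hucpos]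
      linarith
    have h4 : |u x - 1/u x| ≤ B + 2 / (u c / 2) := by
      have h5 : |u x - 1/u x| ≤ |u x| + |1/u x| := by
        rw [sub_eq_add_neg]
        exact le_trans (abs_add_le _ _) (by rw [abs_neg])
      have h6 : |1/u x| = 1/u x := abs_of_pos (by positivity)
      have h7 : 2 / (u c / 2) = 4 / u c := by
        rw [div_div_eq_mul_div]; ring
      have h8 : (2:ℝ) / u c ≤ 4 / u c := (div_le_div_iff_of_pos_right hucpos).mpr (by norm_num)
      rw [h7]
      calc |u x - 1/u x| ≤ |u x| + |1/u x| := h5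
        _ = |u x| + 1/u x := by rw [h6]
        _ ≤ B + 2/u c := add_le_add h2 h3
        _ ≤ B + 4/u c := by linarith
    have habs : |d1 s₀ u x * (u x - 1/u x)| ≤ B + 2 / (u c / 2) := by
      rw [abs_mul]
      calc |d1 s₀ u x| * |u x - 1/u x| ≤ 1 * (B + 2 / (u c / 2)) :=
            mul_le_mul h1 h4 (abs_nonneg _) zero_le_one
        _ = B + 2 / (u c / 2) := one_mul _
    linarith [neg_abs_le (d1 s₀ u x * (u x - 1/u x)), abs_le.mp habs]
  -- b' ∈ T gives the contradiction
  have hb'T : b' ∈ T := by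
    refine ⟨⟨hb'0.le, le_trans hb'c.le hcs₁.le⟩, fun x hx => ?_⟩
    rcases le_total x c with h | h
    · exact hvan2 x ⟨hx.1, h⟩
    · exact hvanIcc x ⟨h, hx.2⟩
  have := csInf_le hTbdd hb'T
  rw [← hc] at this
  linarith

lemma upos {a s₀ : ℝ} {u v : ℝ → ℝ} (ha : 0 < a) (hs₀ : 0 < s₀)
    (hu : ContDiffOn ℝ 2 u (Icc 0 s₀)) (hv : ContDiffOn ℝ 2 v (Icc 0 s₀))
    (hu0 : u 0 = 0) (hv0 : v 0 = a) (hu'0 : d1 s₀ u 0 = 1)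
    (harc : ∀ s ∈ Icc (0:ℝ) s₀, (d1 s₀ u s)^2 + (d1 s₀ v s)^2 = 1)
    (hodeu : ∀ s ∈ Ioc (0:ℝ) s₀,
      d2 s₀ u s = -(d1 s₀ v s)^2 * (u s - 1/u s) + d1 s₀ u s * d1 s₀ v s * v s)
    (hodev : ∀ s ∈ Ioc (0:ℝ) s₀,
      d2 s₀ v s = d1 s₀ v s * d1 s₀ u s * (u s - 1/u s) - (d1 s₀ u s)^2 * v s) :
    ∀ s ∈ Ioc (0:ℝ) s₀, 0 < u s := by
  -- positivity near 0
  have h0I : (0:ℝ) ∈ Icc (0:ℝ) s₀ := ⟨le_rfl, hs₀.le⟩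
  have hU1 : ∃ ε, 0 < ε ∧ ε ≤ s₀ ∧ ∀ s ∈ Ioc (0:ℝ) ε, 0 < u s := by
    have h1 : HasDerivWithinAt u 1 (Icc 0 s₀) 0 := hu'0 ▸ hasD1 hs₀ hu 0 h0I
    rw [hasDerivWithinAt_iff_tendsto_slope] at h1
    have h2 : ∀ᶠ s in nhdsWithin 0 (Icc 0 s₀ \ {0}), 0 < slope u 0 s :=
      h1.eventually (eventually_gt_nhds zero_lt_one)
    rw [eventually_nhdsWithin_iff, Metric.eventually_nhds_iff] at h2
    obtain ⟨ε, hε0, hball⟩ := h2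
    refine ⟨min (ε/2) s₀, lt_min (by linarith) hs₀, min_le_right _ _, fun s hs => ?_⟩
    have hs1 : 0 < s := hs.1
    have hs2 : s ≤ ε/2 := le_trans hs.2 (min_le_left _ _)
    have hs3 : s ≤ s₀ := le_trans hs.2 (min_le_right _ _)
    have hd : dist s 0 < ε := by rw [Real.dist_eq, sub_zero, abs_of_pos hs1]; linarith
    have hmem : s ∈ Icc 0 s₀ \ {0} := ⟨⟨hs1.le, hs3⟩, by simp [ne_of_gt hs1]⟩
    have := hball hd hmem
    rw [slope_def_field, hu0, sub_zero, sub_zero] at this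
    rcases div_pos_iff.mp this with ⟨h, _⟩ | ⟨_, h⟩
    · exact h
    · linarith
  obtain ⟨ε, hε0, hεs₀, hεpos⟩ := hU1
  by_contra hcon
  push_neg at hcon
  obtain ⟨z, hz, hzle⟩ := hcon
  have hεz : ε < z := by
    by_contra h
    push_neg at h
    exact absurd (hεpos z ⟨hz.1, h⟩) (not_lt.mpr hzle)
  set S : Set ℝ := Icc ε z ∩ u ⁻¹' (Iic 0) with hS
  have hScl : IsClosed S :=
    (hu.continuousOn.mono (Icc_subset_Icc hε0.le hz.2)).preimage_isClosed_of_isClosed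
      isClosed_Icc isClosed_Iic
  have hSne : S.Nonempty := ⟨z, ⟨hεz.le, le_rfl⟩, hzle⟩
  have hSbdd : BddBelow S := ⟨ε, fun t ht => ht.1.1⟩
  set s₁ : ℝ := sInf S with hs₁def
  have hs₁S : s₁ ∈ S := hScl.csInf_mem hSne hSbdd
  have hs₁ε : ε ≤ s₁ := hs₁S.1.1
  have hs₁z : s₁ ≤ z := hs₁S.1.2
  have hs₁pos : 0 < s₁ := lt_of_lt_of_le hε0 hs₁ε
  have hs₁Ioc : s₁ ∈ Ioc (0:ℝ) s₀ := ⟨hs₁pos, le_trans hs₁z hz.2⟩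
  have hs₁ε' : ε < s₁ := by
    rcases eq_or_lt_of_le hs₁ε with h | h
    · exfalso
      have := hεpos ε ⟨hε0, le_rfl⟩
      have h2 := hs₁S.2
      rw [← h] at h2
      exact absurd this (not_lt.mpr h2)
    · exact h
  have hupos' : ∀ s ∈ Ioo (0:ℝ) s₁, 0 < u s := by
    intro s hs
    rcases le_or_gt s ε with h | h
    · exact hεpos s ⟨hs.1, h⟩
    · by_contra hle
      push_neg at hle
      have hsS : s ∈ S := ⟨⟨h.le, le_trans hs.2.le hs₁z⟩, hle⟩
      have := csInf_le hSbdd hsS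
      rw [← hs₁def] at this
      linarith [hs.2]
  have hu1 : u s₁ = 0 := by
    have hle : u s₁ ≤ 0 := hs₁S.2
    haveI := l_neBot hs₁pos
    have t1 : Tendsto u (nhdsWithin s₁ (Ioo 0 s₁)) (nhds (u s₁)) :=
      tendsto_l hs₁Ioc hu.continuousOn
    have hge : 0 ≤ u s₁ := by
      refine ge_of_tendsto t1 ?_
      filter_upwards [self_mem_nhdsWithin] with x hx
      exact (hupos' x hx).le
    linarith
  exact touch_false ha hs₀ hu hv hv0 harc hodeu hodev hs₁Ioc hu1 hupos'

noncomputable def FF (s₀ : ℝ) (u v : ℝ → ℝ) : ℝ → ℝ := fun s =>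
  ((u s^2 - 1) * d1 s₀ v s - u s * d1 s₀ u s * v s) * Real.exp (-(u s^2 + v s^2)/2)

noncomputable def FF' (s₀ : ℝ) (u v : ℝ → ℝ) : ℝ → ℝ := fun s =>
  ((2*u s*d1 s₀ u s*d1 s₀ v s + (u s^2-1)*d2 s₀ v s
    - (d1 s₀ u s^2*v s + u s*d2 s₀ u s*v s + u s*d1 s₀ u s*d1 s₀ v s))
   + ((u s^2-1)*d1 s₀ v s - u s*d1 s₀ u s*v s) * (-(u s*d1 s₀ u s + v s*d1 s₀ v s)))
  * Real.exp (-(u s^2 + v s^2)/2)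

lemma FF_cont {s₀ : ℝ} {u v : ℝ → ℝ} (hs₀ : 0 < s₀)
    (hu : ContDiffOn ℝ 2 u (Icc 0 s₀)) (hv : ContDiffOn ℝ 2 v (Icc 0 s₀)) :
    ContinuousOn (FF s₀ u v) (Icc 0 s₀) := by
  have h1 := hu.continuousOn
  have h2 := hv.continuousOn
  have h3 := d1_continuousOn hs₀ hu
  have h4 := d1_continuousOn hs₀ hv
  apply ContinuousOn.mul
  · exact (((h1.pow 2).sub continuousOn_const).mul h4).sub ((h1.mul h3).mul h2)
  · exact Real.continuous_exp.comp_continuousOn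
      (((h1.pow 2).add (h2.pow 2)).neg.div_const 2)

lemma FF'_cont {s₀ : ℝ} {u v : ℝ → ℝ} (hs₀ : 0 < s₀)
    (hu : ContDiffOn ℝ 2 u (Icc 0 s₀)) (hv : ContDiffOn ℝ 2 v (Icc 0 s₀)) :
    ContinuousOn (FF' s₀ u v) (Icc 0 s₀) := by
  have h1 := hu.continuousOn
  have h2 := hv.continuousOn
  have h3 := d1_continuousOn hs₀ hu
  have h4 := d1_continuousOn hs₀ hv
  have h5 := d2_continuousOn hs₀ hu
  have h6 := d2_continuousOn hs₀ hv
  apply ContinuousOn.mul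
  · apply ContinuousOn.add
    · exact ((((continuousOn_const.mul h1).mul h3).mul h4).add
        (((h1.pow 2).sub continuousOn_const).mul h6)).sub
        ((((h3.pow 2).mul h2).add ((h1.mul h5).mul h2)).add ((h1.mul h3).mul h4))
    · exact ((((h1.pow 2).sub continuousOn_const).mul h4).sub ((h1.mul h3).mul h2)).mul
        ((h1.mul h3).add (h2.mul h4)).neg
  · exact Real.continuous_exp.comp_continuousOn
      (((h1.pow 2).add (h2.pow 2)).neg.div_const 2)

lemma FF_hasDeriv {s₀ : ℝ} {u v : ℝ → ℝ} (hs₀ : 0 < s₀)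
    (hu : ContDiffOn ℝ 2 u (Icc 0 s₀)) (hv : ContDiffOn ℝ 2 v (Icc 0 s₀)) :
    ∀ s ∈ Icc (0:ℝ) s₀, HasDerivWithinAt (FF s₀ u v) (FF' s₀ u v s) (Icc 0 s₀) s := by
  intro s hs
  have hu1 : HasDerivWithinAt u (d1 s₀ u s) (Icc 0 s₀) s := hasD1 hs₀ hu s hs
  have hv1 : HasDerivWithinAt v (d1 s₀ v s) (Icc 0 s₀) s := hasD1 hs₀ hv s hs
  have hu2 : HasDerivWithinAt (d1 s₀ u) (d2 s₀ u s) (Icc 0 s₀) s := hasD2 hs₀ hu s hs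
  have hv2 : HasDerivWithinAt (d1 s₀ v) (d2 s₀ v s) (Icc 0 s₀) s := hasD2 hs₀ hv s hs
  have hA : HasDerivWithinAt (fun s => u s^2 - 1) (2*u s*d1 s₀ u s) (Icc 0 s₀) s := by
    have := (hu1.fun_pow 2).sub_const 1
    refine this.congr_deriv (Eq.symm ?_); push_cast; ring
  have hP := (hA.mul hv2).sub ((hu1.mul hu2).mul hv1)
  have hg : HasDerivWithinAt (fun s => -(u s^2 + v s^2)/2)
      (-(2*u s*d1 s₀ u s + 2*v s*d1 s₀ v s)/2) (Icc 0 s₀) s := by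
    have := ((hu1.fun_pow 2).add (hv1.fun_pow 2)).neg.div_const 2
    refine this.congr_deriv (Eq.symm ?_); push_cast; ring
  have hE := (Real.hasDerivAt_exp (-(u s^2 + v s^2)/2)).comp_hasDerivWithinAt s hg
  have := hP.mul hE
  refine this.congr_deriv (Eq.symm ?_)
  show FF' s₀ u v s = _
  unfold FF'
  simp only [Function.comp_apply, Pi.mul_apply, Pi.sub_apply]
  ring

lemma FF'_eq {s₀ : ℝ} {u v : ℝ → ℝ}
    (hodeu : ∀ s ∈ Ioc (0:ℝ) s₀,
      d2 s₀ u s = -(d1 s₀ v s)^2 * (u s - 1/u s) + d1 s₀ u s * d1 s₀ v s * v s)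
    (hodev : ∀ s ∈ Ioc (0:ℝ) s₀,
      d2 s₀ v s = d1 s₀ v s * d1 s₀ u s * (u s - 1/u s) - (d1 s₀ u s)^2 * v s)
    (hup : ∀ s ∈ Ioc (0:ℝ) s₀, 0 < u s) :
    ∀ t ∈ Ioc (0:ℝ) s₀, FF' s₀ u v t
      = Real.exp (-(u t^2 + v t^2)/2) * (d1 s₀ u t * d1 s₀ v t / u t) := by
  intro t ht
  have hut : u t ≠ 0 := ne_of_gt (hup t ht)
  unfold FF'
  rw [hodeu t ht, hodev t ht]
  field_simp
  ring


/-- Along any solution of (S) with the given initial data, the integrand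
`t ↦ e^{-(u²+v²)/2} u'v'/u` extends continuously to `t = 0`, and the curvature
`k = -v'u'' + u'v''` satisfies `k(s) = φ(s) e^{(u²+v²)/2}/u(s)` where
`φ(s) = ∫₀ˢ e^{-(u²+v²)/2} u'v'/u dt`. -/
theorem curvature_integral_formula (a s₀ : ℝ) (ha : 0 < a) (hs₀ : 0 < s₀)
    (u v : ℝ → ℝ) (hsol : IsSolS a s₀ u v) :
    (∃ G : ℝ → ℝ, ContinuousOn G (Icc 0 s₀) ∧
      ∀ t ∈ Ioc (0:ℝ) s₀,
        G t = Real.exp (-(u t ^ 2 + v t ^ 2) / 2) * (d1 s₀ u t * d1 s₀ v t / u t)) ∧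
    ∀ s ∈ Ioc (0:ℝ) s₀,
      -(d1 s₀ v s) * d2 s₀ u s + d1 s₀ u s * d2 s₀ v s
        = (∫ t in (0:ℝ)..s,
            Real.exp (-(u t ^ 2 + v t ^ 2) / 2) * (d1 s₀ u t * d1 s₀ v t / u t))
          * Real.exp ((u s ^ 2 + v s ^ 2) / 2) / u s := by
  obtain ⟨hu, hv, hu0, hv0, hu'0, hv'0, harc, hode⟩ := hsol
  have hodeu := fun s hs => (hode s hs).1
  have hodev := fun s hs => (hode s hs).2
  have hup := upos ha hs₀ hu hv hu0 hv0 hu'0 harc hodeu hodev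
  have hFF'eq := FF'_eq hodeu hodev hup
  constructor
  · exact ⟨FF' s₀ u v, FF'_cont hs₀ hu hv, hFF'eq⟩
  intro s hs
  have hsI : s ∈ Icc (0:ℝ) s₀ := ⟨hs.1.le, hs.2⟩
  -- the integral equals FF s
  have hint : (∫ t in (0:ℝ)..s,
      Real.exp (-(u t ^ 2 + v t ^ 2) / 2) * (d1 s₀ u t * d1 s₀ v t / u t)) = FF s₀ u v s := by
    have hsub : Icc (0:ℝ) s ⊆ Icc 0 s₀ := Icc_subset_Icc le_rfl hs.2
    have h1 : (∫ t in (0:ℝ)..s,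
        Real.exp (-(u t ^ 2 + v t ^ 2) / 2) * (d1 s₀ u t * d1 s₀ v t / u t))
        = ∫ t in (0:ℝ)..s, FF' s₀ u v t := by
      apply intervalIntegral.integral_congr_ae
      filter_upwards [] with x hx
      rw [uIoc_of_le hs.1.le] at hx
      exact (hFF'eq x ⟨hx.1, hx.2.trans hs.2⟩).symm
    have h2 : (∫ t in (0:ℝ)..s, FF' s₀ u v t) = FF s₀ u v s - FF s₀ u v 0 := by
      apply intervalIntegral.integral_eq_sub_of_hasDeriv_right_of_le hs.1.le
        ((FF_cont hs₀ hu hv).mono hsub)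
      · intro x hx
        have hxI : x ∈ Icc (0:ℝ) s₀ := hsub (Ioo_subset_Icc_self hx)
        have hnb : Icc (0:ℝ) s₀ ∈ nhds x := Icc_mem_nhds hx.1 (lt_of_lt_of_le hx.2 hs.2)
        exact (((FF_hasDeriv hs₀ hu hv) x hxI).hasDerivAt hnb).hasDerivWithinAt
      · apply ContinuousOn.intervalIntegrable
        rw [uIcc_of_le hs.1.le]
        exact (FF'_cont hs₀ hu hv).mono hsub
    have h3 : FF s₀ u v 0 = 0 := by
      unfold FF
      rw [hu0, hv'0]
      ring
    rw [h1, h2, h3, sub_zero]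
  rw [hint]
  -- curvature identity
  have hus : 0 < u s := hup s hs
  have hexp : Real.exp (-(u s ^ 2 + v s ^ 2) / 2) * Real.exp ((u s ^ 2 + v s ^ 2) / 2) = 1 := by
    rw [← Real.exp_add,
      show (-(u s ^ 2 + v s ^ 2) / 2 + (u s ^ 2 + v s ^ 2) / 2) = 0 by ring, Real.exp_zero]
  have hk : -(d1 s₀ v s) * d2 s₀ u s + d1 s₀ u s * d2 s₀ v s
      = (u s - 1/u s) * d1 s₀ v s - d1 s₀ u s * v s := by
    rw [hodeu s hs, hodev s hs]
    linear_combination ((u s - 1/u s) * d1 s₀ v s - d1 s₀ u s * v s) * (harc s hsI)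
  rw [hk]
  unfold FF
  rw [eq_div_iff (ne_of_gt hus)]
  have hrw : (u s ^ 2 - 1) * d1 s₀ v s - u s * d1 s₀ u s * v s
      = ((u s - 1/u s) * d1 s₀ v s - d1 s₀ u s * v s) * u s := by
    field_simp
  calc ((u s - 1/u s) * d1 s₀ v s - d1 s₀ u s * v s) * u s
      = ((u s ^ 2 - 1) * d1 s₀ v s - u s * d1 s₀ u s * v s) * 1 := by rw [hrw]; ring
    _ = _ := by rw [← hexp]; ring
end

section
/- Let a > 0 and let (u(s), v(s)) solve the system (S) on some interval (0, s₀] with initial data u(0)=0, v(0)=a, u'(0)=1, v'(0)=0 (and u, v ∈ C²([0,s₀]), u'² + v'² = 1). Then for all s ∈ (0, s₀] the curvature k = -v'u'' + u'v'' satisfies k(s) = -v'(s)/u(s) - (e^{(u(s)² + v(s)²)/2} / u(s)) ∫₀ˢ e^{-(u(t)² + v(t)²)/2} v(t) dt. -/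
open Set Filter Topology

section Aux
variable {s₀ : ℝ} {u : ℝ → ℝ}

lemma aux_cd1 (hs₀ : 0 < s₀) (hu : ContDiffOn ℝ 2 u (Icc 0 s₀)) :
    ContDiffOn ℝ 1 (d1 s₀ u) (Icc 0 s₀) :=
  hu.derivWithin (uniqueDiffOn_Icc hs₀) (by norm_num)

lemma aux_cont_d1 (hs₀ : 0 < s₀) (hu : ContDiffOn ℝ 2 u (Icc 0 s₀)) :
    ContinuousOn (d1 s₀ u) (Icc 0 s₀) :=
  (aux_cd1 hs₀ hu).continuousOn

lemma aux_cont_d2 (hs₀ : 0 < s₀) (hu : ContDiffOn ℝ 2 u (Icc 0 s₀)) :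
    ContinuousOn (d2 s₀ u) (Icc 0 s₀) :=
  ((aux_cd1 hs₀ hu).derivWithin (m := 0) (uniqueDiffOn_Icc hs₀) (by norm_num)).continuousOn

lemma aux_hd_u {t : ℝ} (hu : ContDiffOn ℝ 2 u (Icc 0 s₀)) (ht : t ∈ Icc 0 s₀) :
    HasDerivWithinAt u (d1 s₀ u t) (Icc 0 s₀) t :=
  ((hu.differentiableOn (by norm_num)) t ht).hasDerivWithinAt

lemma aux_hd_u1 {t : ℝ} (hs₀ : 0 < s₀) (hu : ContDiffOn ℝ 2 u (Icc 0 s₀)) (ht : t ∈ Icc 0 s₀) :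
    HasDerivWithinAt (d1 s₀ u) (d2 s₀ u t) (Icc 0 s₀) t :=
  (((aux_cd1 hs₀ hu).differentiableOn (by norm_num)) t ht).hasDerivWithinAt

lemma aux_hda_u {t : ℝ} (hu : ContDiffOn ℝ 2 u (Icc 0 s₀)) (ht : t ∈ Ioo 0 s₀) :
    HasDerivAt u (d1 s₀ u t) t :=
  (aux_hd_u hu (Ioo_subset_Icc_self ht)).hasDerivAt (Icc_mem_nhds ht.1 ht.2)

lemma aux_hda_u1 {t : ℝ} (hs₀ : 0 < s₀) (hu : ContDiffOn ℝ 2 u (Icc 0 s₀)) (ht : t ∈ Ioo 0 s₀) :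
    HasDerivAt (d1 s₀ u) (d2 s₀ u t) t :=
  (aux_hd_u1 hs₀ hu (Ioo_subset_Icc_self ht)).hasDerivAt (Icc_mem_nhds ht.1 ht.2)

end Aux

lemma star (a s₀ : ℝ) (hs₀ : 0 < s₀) (u v : ℝ → ℝ) (hsol : IsSolS a s₀ u v) :
    ∀ s ∈ Ioc (0:ℝ) s₀, u s = 0 → d1 s₀ v s = 0 := by
  obtain ⟨hu, hv, hu0, hv0, hu10, hv10, hunit, hode⟩ := hsol
  intro τ hτ huτ
  set S : Set ℝ := {t | t ∈ Ioo 0 τ ∧ u t ≠ 0} with hSdef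
  have hSsub : S ⊆ Icc 0 s₀ := fun t ht => ⟨ht.1.1.le, ht.1.2.le.trans hτ.2⟩
  -- S is nonempty
  have hne1 : (𝓝[Ioo (0:ℝ) τ] 0).NeBot := by
    rw [← mem_closure_iff_nhdsWithin_neBot, closure_Ioo hτ.1.ne]
    exact ⟨le_refl 0, hτ.1.le⟩
  have hslope0 : Tendsto (slope u 0) (𝓝[Ioo (0:ℝ) τ] 0) (𝓝 1) := by
    have h := hasDerivWithinAt_iff_tendsto_slope.1 (aux_hd_u hu (⟨le_refl 0, hs₀.le⟩ : (0:ℝ) ∈ Icc 0 s₀))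
    rw [hu10] at h
    exact h.mono_left (nhdsWithin_mono 0 (fun t ht =>
      ⟨⟨ht.1.le, ht.2.le.trans hτ.2⟩, ne_of_gt ht.1⟩))
  have hSne : S.Nonempty := by
    have hev : ∀ᶠ t in 𝓝[Ioo (0:ℝ) τ] 0, slope u 0 t > 0 :=
      hslope0.eventually (eventually_gt_nhds one_pos)
    obtain ⟨t₀, ht₀s, ht₀m⟩ := (hev.and (eventually_mem_nhdsWithin)).exists
    refine ⟨t₀, ht₀m, fun h0 => ?_⟩
    rw [slope_def_field, h0, hu0, sub_zero, zero_div] at ht₀s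
    exact lt_irrefl 0 ht₀s
  have hbdd : BddAbove S := ⟨τ, fun t ht => ht.1.2.le⟩
  set ℓ : ℝ := sSup S with hldef
  have hℓle : ℓ ≤ τ := csSup_le hSne (fun t ht => ht.1.2.le)
  have hℓpos : 0 < ℓ := lt_of_lt_of_le hSne.choose_spec.1.1 (le_csSup hbdd hSne.choose_spec)
  have hℓIcc : ℓ ∈ Icc 0 s₀ := ⟨hℓpos.le, hℓle.trans hτ.2⟩
  have hM : (𝓝[S] ℓ).NeBot := mem_closure_iff_nhdsWithin_neBot.1 (csSup_mem_closure hSne hbdd)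
  have hMle : 𝓝[S] ℓ ≤ 𝓝[Icc 0 s₀] ℓ := nhdsWithin_mono ℓ hSsub
  -- u ℓ = 0
  have huℓ : u ℓ = 0 := by
    rcases eq_or_lt_of_le hℓle with heq | hlt
    · rw [heq]; exact huτ
    · by_contra hne
      have hcont : ContinuousWithinAt u (Icc 0 s₀) ℓ := hu.continuousOn ℓ hℓIcc
      have hev : ∀ᶠ t in 𝓝[Icc 0 s₀] ℓ, u t ≠ 0 :=
        hcont.eventually (isOpen_ne.eventually_mem hne)
      have hne2 : (𝓝[Ioo ℓ τ] ℓ).NeBot := by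
        rw [← mem_closure_iff_nhdsWithin_neBot, closure_Ioo hlt.ne]
        exact ⟨le_refl ℓ, hlt.le⟩
      have hsub2 : Ioo ℓ τ ⊆ Icc 0 s₀ := fun t ht =>
        ⟨(hℓpos.trans ht.1).le, ht.2.le.trans hτ.2⟩
      have hev2 : ∀ᶠ t in 𝓝[Ioo ℓ τ] ℓ, u t ≠ 0 :=
        hev.filter_mono (nhdsWithin_mono ℓ hsub2)
      obtain ⟨t, htu, htm⟩ := (hev2.and eventually_mem_nhdsWithin).exists
      have : t ∈ S := ⟨⟨hℓpos.trans htm.1, htm.2⟩, htu⟩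
      exact absurd (le_csSup hbdd this) (not_le.2 htm.1)
  -- v' ℓ = 0
  have hv1ℓ : d1 s₀ v ℓ = 0 := by
    set R : ℝ → ℝ := fun t => d2 s₀ u t + (d1 s₀ v t) ^ 2 * u t - d1 s₀ u t * d1 s₀ v t * v t
      with hRdef
    have hRS : ∀ t ∈ S, (d1 s₀ v t) ^ 2 = u t * R t := by
      intro t ht
      have hode1 := (hode t ⟨ht.1.1, ht.1.2.le.trans hτ.2⟩).1
      rw [hRdef]
      field_simp [ht.2] at hode1 ⊢
      linarith [hode1]
    have hT1 : Tendsto (fun t => (d1 s₀ v t) ^ 2) (𝓝[S] ℓ) (𝓝 ((d1 s₀ v ℓ) ^ 2)) :=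
      (((aux_cont_d1 hs₀ hv) ℓ hℓIcc).pow 2).tendsto.mono_left hMle
    have hT2 : Tendsto (fun t => u t * R t) (𝓝[S] ℓ) (𝓝 (u ℓ * R ℓ)) := by
      have hRc : ContinuousWithinAt R (Icc 0 s₀) ℓ := by
        apply ContinuousWithinAt.sub
        apply ContinuousWithinAt.add
        · exact (aux_cont_d2 hs₀ hu) ℓ hℓIcc
        · exact (((aux_cont_d1 hs₀ hv) ℓ hℓIcc).pow 2).mul (hu.continuousOn ℓ hℓIcc)
        · exact (((aux_cont_d1 hs₀ hu) ℓ hℓIcc).mul ((aux_cont_d1 hs₀ hv) ℓ hℓIcc)).mul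
            (hv.continuousOn ℓ hℓIcc)
      exact ((hu.continuousOn ℓ hℓIcc).mul hRc).tendsto.mono_left hMle
    have heq : (d1 s₀ v ℓ) ^ 2 = u ℓ * R ℓ := by
      refine tendsto_nhds_unique (hT1.congr' ?_) hT2
      filter_upwards [eventually_mem_nhdsWithin] with t ht using hRS t ht
    rw [huℓ, zero_mul] at heq
    exact pow_eq_zero_iff (n := 2) (by norm_num) |>.1 heq
  -- u' ℓ ^ 2 = 1
  have hu1ℓsq : (d1 s₀ u ℓ) ^ 2 = 1 := by
    have := hunit ℓ hℓIcc
    rw [hv1ℓ] at this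
    simpa using this
  -- conclude: ℓ = τ
  rcases eq_or_lt_of_le hℓle with heq | hlt
  · rw [← heq]; exact hv1ℓ
  · exfalso
    have huzero : ∀ t ∈ Ioo ℓ τ, u t = 0 := by
      intro t ht
      by_contra hne
      have : t ∈ S := ⟨⟨hℓpos.trans ht.1, ht.2⟩, hne⟩
      exact absurd (le_csSup hbdd this) (not_le.2 ht.1)
    have hne2 : (𝓝[Ioo ℓ τ] ℓ).NeBot := by
      rw [← mem_closure_iff_nhdsWithin_neBot, closure_Ioo hlt.ne]
      exact ⟨le_refl ℓ, hlt.le⟩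
    have hsub2 : Ioo ℓ τ ⊆ Icc 0 s₀ \ {ℓ} := fun t ht =>
      ⟨⟨(hℓpos.trans ht.1).le, ht.2.le.trans hτ.2⟩, ne_of_gt ht.1⟩
    have hslope : Tendsto (slope u ℓ) (𝓝[Ioo ℓ τ] ℓ) (𝓝 (d1 s₀ u ℓ)) :=
      (hasDerivWithinAt_iff_tendsto_slope.1 (aux_hd_u hu hℓIcc)).mono_left
        (nhdsWithin_mono ℓ hsub2)
    have hslope0 : Tendsto (slope u ℓ) (𝓝[Ioo ℓ τ] ℓ) (𝓝 0) := by
      refine tendsto_const_nhds.congr' ?_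
      filter_upwards [eventually_mem_nhdsWithin] with t ht
      rw [slope_def_field, huzero t ht, huℓ, sub_zero, zero_div]
    have : d1 s₀ u ℓ = 0 := tendsto_nhds_unique hslope hslope0
    rw [this] at hu1ℓsq
    norm_num at hu1ℓsq

noncomputable def Fa (s₀ : ℝ) (u v : ℝ → ℝ) : ℝ → ℝ := fun t =>
  Real.exp (-(u t ^ 2 + v t ^ 2) / 2) * (u t ^ 2 * d1 s₀ v t - u t * d1 s₀ u t * v t)

lemma hasDerivAt_F (a s₀ : ℝ) (hs₀ : 0 < s₀) (u v : ℝ → ℝ) (hsol : IsSolS a s₀ u v)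
    {t : ℝ} (ht : t ∈ Ioo 0 s₀) :
    HasDerivAt (Fa s₀ u v) (-(Real.exp (-(u t ^ 2 + v t ^ 2) / 2) * v t)) t := by
  have hstar := star a s₀ hs₀ u v hsol
  obtain ⟨hu, hv, hu0, hv0, hu10, hv10, hunit, hode⟩ := hsol
  have hu' := aux_hda_u hu ht
  have hv' := aux_hda_u (u := v) hv ht
  have hu1' := aux_hda_u1 hs₀ hu ht
  have hv1' := aux_hda_u1 hs₀ hv ht
  have hsq : HasDerivAt (fun s => u s ^ 2) (2 * u t * d1 s₀ u t) t := by
    simpa using hu'.fun_pow 2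
  have hexp : HasDerivAt (fun s => Real.exp (-(u s ^ 2 + v s ^ 2) / 2))
      (Real.exp (-(u t ^ 2 + v t ^ 2) / 2) * (-(2 * u t * d1 s₀ u t + 2 * v t * d1 s₀ v t) / 2))
      t := by
    have h2 : HasDerivAt (fun s => -(u s ^ 2 + v s ^ 2) / 2)
        (-(2 * u t * d1 s₀ u t + 2 * v t * d1 s₀ v t) / 2) t := by
      have := ((hu'.fun_pow 2).add (hv'.fun_pow 2)).neg.div_const 2
      refine this.congr_deriv (Eq.symm ?_)
      push_cast
      ring
    exact h2.exp
  have hinner : HasDerivAt (fun s => u s ^ 2 * d1 s₀ v s - u s * d1 s₀ u s * v s)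
      ((2 * u t * d1 s₀ u t) * d1 s₀ v t + u t ^ 2 * d2 s₀ v t
        - ((d1 s₀ u t * d1 s₀ u t + u t * d2 s₀ u t) * v t + u t * d1 s₀ u t * d1 s₀ v t)) t :=
    (hsq.mul hv1').sub ((hu'.mul hu1').mul hv')
  have hF := hexp.mul hinner
  refine hF.congr_deriv (Eq.symm ?_)
  have hodet := hode t ⟨ht.1, ht.2.le⟩
  have hunitt := hunit t (Ioo_subset_Icc_self ht)
  set E := Real.exp (-(u t ^ 2 + v t ^ 2) / 2) with hE
  by_cases hut : u t = 0
  · have hv1t : d1 s₀ v t = 0 := hstar t ⟨ht.1, ht.2.le⟩ hut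
    rw [hv1t] at hunitt
    rw [hodet.1, hodet.2, hut, hv1t]
    ring_nf
    linear_combination (E * v t) * hunitt
  · rw [hodet.1, hodet.2]
    field_simp
    linear_combination (E * v t) * hunitt

lemma contOn_F (a s₀ : ℝ) (hs₀ : 0 < s₀) (u v : ℝ → ℝ) (hsol : IsSolS a s₀ u v) :
    ContinuousOn (Fa s₀ u v) (Icc 0 s₀) := by
  obtain ⟨hu, hv, -⟩ := hsol
  have hcu := hu.continuousOn
  have hcv := hv.continuousOn
  have hcu1 := aux_cont_d1 hs₀ hu
  have hcv1 := aux_cont_d1 hs₀ hv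
  apply ContinuousOn.mul
  · exact (((((hcu.pow 2).add (hcv.pow 2)).neg).div_const 2)).rexp
  · exact (((hcu.pow 2).mul hcv1)).sub (((hcu.mul hcu1)).mul hcv)

lemma integral_eq_F (a s₀ : ℝ) (hs₀ : 0 < s₀) (u v : ℝ → ℝ) (hsol : IsSolS a s₀ u v)
    {s : ℝ} (hs : s ∈ Ioc (0:ℝ) s₀) :
    (∫ t in (0:ℝ)..s, Real.exp (-(u t ^ 2 + v t ^ 2) / 2) * v t) = -(Fa s₀ u v s) := by
  have hcu := hsol.1.continuousOn
  have hcv := hsol.2.1.continuousOn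
  have hIccsub : Icc (0:ℝ) s ⊆ Icc 0 s₀ := Icc_subset_Icc le_rfl hs.2
  have hcont : ContinuousOn (fun t => Real.exp (-(u t ^ 2 + v t ^ 2) / 2) * v t) (Icc 0 s) :=
    (((((hcu.pow 2).add (hcv.pow 2)).neg).div_const 2).rexp.mul hcv).mono hIccsub
  have hint : IntervalIntegrable (fun t => -(Real.exp (-(u t ^ 2 + v t ^ 2) / 2) * v t))
      MeasureTheory.volume 0 s := by
    apply ContinuousOn.intervalIntegrable
    rw [uIcc_of_le hs.1.le]
    exact hcont.neg
  have hderiv : ∀ x ∈ Ioo (0:ℝ) s, HasDerivAt (Fa s₀ u v)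
      (-(Real.exp (-(u x ^ 2 + v x ^ 2) / 2) * v x)) x := fun x hx =>
    hasDerivAt_F a s₀ hs₀ u v hsol ⟨hx.1, hx.2.trans_le hs.2⟩
  have h := intervalIntegral.integral_eq_sub_of_hasDerivAt_of_le hs.1.le
    ((contOn_F a s₀ hs₀ u v hsol).mono hIccsub) hderiv hint
  have hF0 : Fa s₀ u v 0 = 0 := by
    simp [Fa, hsol.2.2.1]
  rw [hF0, sub_zero, intervalIntegral.integral_neg] at h
  linarith

lemma k_formula (a s₀ : ℝ) (hs₀ : 0 < s₀) (u v : ℝ → ℝ) (hsol : IsSolS a s₀ u v) :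
    ∀ t ∈ Ioc (0:ℝ) s₀,
      -(d1 s₀ v t) * d2 s₀ u t + d1 s₀ u t * d2 s₀ v t
        = d1 s₀ v t * u t - d1 s₀ v t / u t - d1 s₀ u t * v t := by
  intro t ht
  have hstar := star a s₀ hs₀ u v hsol
  obtain ⟨hu, hv, hu0, hv0, hu10, hv10, hunit, hode⟩ := hsol
  have hodet := hode t ht
  have hunitt := hunit t ⟨ht.1.le, ht.2⟩
  by_cases hut : u t = 0
  · have hv1t : d1 s₀ v t = 0 := hstar t ht hut
    rw [hodet.1, hodet.2, hut, hv1t]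
    simp only [div_zero, zero_div]
    ring_nf
    rw [hv1t] at hunitt
    linear_combination (-(d1 s₀ u t * v t)) * hunitt
  · rw [hodet.1, hodet.2]
    field_simp
    linear_combination (d1 s₀ v t * (u t ^ 2 - 1) - u t * d1 s₀ u t * v t) * hunitt

lemma k_zero (a s₀ : ℝ) (hs₀ : 0 < s₀) (u v : ℝ → ℝ) (hsol : IsSolS a s₀ u v)
    {s : ℝ} (hs : s ∈ Ioc (0:ℝ) s₀) (hus : u s = 0) :
    -(d1 s₀ v s) * d2 s₀ u s + d1 s₀ u s * d2 s₀ v s = 0 := by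
  have hstar := star a s₀ hs₀ u v hsol
  have hkf := k_formula a s₀ hs₀ u v hsol
  have hcu := hsol.1.continuousOn
  have hcv := hsol.2.1.continuousOn
  have hcu1 := aux_cont_d1 hs₀ hsol.1
  have hcv1 := aux_cont_d1 hs₀ hsol.2.1
  have hcu2 := aux_cont_d2 hs₀ hsol.1
  have hcv2 := aux_cont_d2 hs₀ hsol.2.1
  obtain ⟨hu, hv, hu0, hv0, hu10, hv10, hunit, hode⟩ := hsol
  have hsIcc : s ∈ Icc 0 s₀ := ⟨hs.1.le, hs.2⟩
  have hv1s : d1 s₀ v s = 0 := hstar s hs hus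
  have hu1sq : (d1 s₀ u s) ^ 2 = 1 := by
    have := hunit s hsIcc; rw [hv1s] at this; simpa using this
  have hu1ne : d1 s₀ u s ≠ 0 := by
    intro h; rw [h] at hu1sq; norm_num at hu1sq
  set L := 𝓝[Ioo (0:ℝ) s] s with hL
  have hLne : L.NeBot := by
    rw [hL, ← mem_closure_iff_nhdsWithin_neBot, closure_Ioo hs.1.ne]
    exact ⟨hs.1.le, le_rfl⟩
  have hsub1 : Ioo (0:ℝ) s ⊆ Icc 0 s₀ := fun t ht => ⟨ht.1.le, ht.2.le.trans hs.2⟩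
  have hsub2 : Ioo (0:ℝ) s ⊆ Icc 0 s₀ \ {s} := fun t ht => ⟨hsub1 ht, ne_of_lt ht.2⟩
  have hLle : L ≤ 𝓝[Icc 0 s₀] s := nhdsWithin_mono s hsub1
  have hLle2 : L ≤ 𝓝[Icc 0 s₀ \ {s}] s := nhdsWithin_mono s hsub2
  -- slope limits
  have hsu : Tendsto (slope u s) L (𝓝 (d1 s₀ u s)) :=
    (hasDerivWithinAt_iff_tendsto_slope.1 (aux_hd_u hu hsIcc)).mono_left hLle2
  have hsv1 : Tendsto (slope (d1 s₀ v) s) L (𝓝 (d2 s₀ v s)) :=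
    (hasDerivWithinAt_iff_tendsto_slope.1 (aux_hd_u1 hs₀ hv hsIcc)).mono_left hLle2
  have hquot : Tendsto (fun t => d1 s₀ v t / u t) L (𝓝 (d2 s₀ v s / d1 s₀ u s)) := by
    refine (hsv1.div hsu hu1ne).congr' ?_
    filter_upwards [eventually_mem_nhdsWithin] with t ht
    have hts : t - s ≠ 0 := sub_ne_zero.2 (ne_of_lt ht.2)
    simp only [Pi.div_apply]
    rw [slope_def_field, slope_def_field, hus, hv1s, sub_zero, sub_zero,
      div_div_div_cancel_right₀ hts]
  -- continuity of k
  have hk : Tendsto (fun t => -(d1 s₀ v t) * d2 s₀ u t + d1 s₀ u t * d2 s₀ v t) L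
      (𝓝 (-(d1 s₀ v s) * d2 s₀ u s + d1 s₀ u s * d2 s₀ v s)) := by
    refine Tendsto.mono_left ?_ hLle
    exact (((hcv1 s hsIcc).neg.mul (hcu2 s hsIcc)).add ((hcu1 s hsIcc).mul (hcv2 s hsIcc))).tendsto
  -- the other limit
  have hother : Tendsto (fun t => -(d1 s₀ v t) * d2 s₀ u t + d1 s₀ u t * d2 s₀ v t) L
      (𝓝 (d1 s₀ v s * u s - d2 s₀ v s / d1 s₀ u s - d1 s₀ u s * v s)) := by
    have T1 : Tendsto (fun t => d1 s₀ v t * u t) L (𝓝 (d1 s₀ v s * u s)) :=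
      (((hcv1 s hsIcc).mul (hcu s hsIcc))).tendsto.mono_left hLle
    have T3 : Tendsto (fun t => d1 s₀ u t * v t) L (𝓝 (d1 s₀ u s * v s)) :=
      (((hcu1 s hsIcc).mul (hcv s hsIcc))).tendsto.mono_left hLle
    refine ((T1.sub hquot).sub T3).congr' ?_
    filter_upwards [eventually_mem_nhdsWithin] with t ht
    exact (hkf t ⟨ht.1, ht.2.le.trans hs.2⟩).symm
  have heq := tendsto_nhds_unique hk hother
  rw [heq]
  have hv2s : d2 s₀ v s = -(d1 s₀ u s) ^ 2 * v s := by
    have := (hode s hs).2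
    rw [hv1s, hus] at this
    simpa using this
  rw [hv2s, hv1s, hus]
  field_simp
  ring

/-- Along any solution of (S) with the given initial data, the curvature
`k = -v'u'' + u'v''` satisfies
`k(s) = -v'(s)/u(s) - (e^{(u²+v²)(s)/2}/u(s)) ∫₀ˢ e^{-(u²+v²)/2} v dt`. -/
theorem curvature_second_formula (a s₀ : ℝ) (ha : 0 < a) (hs₀ : 0 < s₀)
    (u v : ℝ → ℝ) (hsol : IsSolS a s₀ u v) :
    ∀ s ∈ Ioc (0:ℝ) s₀,
      -(d1 s₀ v s) * d2 s₀ u s + d1 s₀ u s * d2 s₀ v s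
        = -(d1 s₀ v s) / u s
          - Real.exp ((u s ^ 2 + v s ^ 2) / 2) / u s
            * ∫ t in (0:ℝ)..s, Real.exp (-(u t ^ 2 + v t ^ 2) / 2) * v t := by
  intro s hs
  rw [integral_eq_F a s₀ hs₀ u v hsol hs]
  by_cases hus : u s = 0
  · have hv1s : d1 s₀ v s = 0 := star a s₀ hs₀ u v hsol s hs hus
    rw [k_zero a s₀ hs₀ u v hsol hs hus, hv1s, hus]
    simp [Fa, hus]
  · rw [k_formula a s₀ hs₀ u v hsol s hs]
    unfold Fa
    have hexp : Real.exp (-(u s ^ 2 + v s ^ 2) / 2)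
        = (Real.exp ((u s ^ 2 + v s ^ 2) / 2))⁻¹ := by
      rw [← Real.exp_neg]
      ring_nf
    rw [hexp]
    have hEne : Real.exp ((u s ^ 2 + v s ^ 2) / 2) ≠ 0 := (Real.exp_pos _).ne'
    field_simp
    ring
end
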